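/- Let h : ℝ → ℝ be nonnegative and antitone (nonincreasing) on [0, ∞), and suppose that the radially symmetric function H : ℝ² → ℝ defined by H(x) = h(‖x‖) is integrable with respect to Lebesgue measure. Define the convolution (H ⋆ H)(x) = ∫_{ℝ²} H(y)·H(x − y) dy. Then H ⋆ H is radially symmetric and radially nonincreasing: for all x₁, x₂ ∈ ℝ² with ‖x₁‖ ≤ ‖x₂‖ one has (H ⋆ H)(x₂) ≤ (H ⋆ H)(x₁). -/

import Mathlib

open MeasureTheory Set
open scoped ENNReal NNReal

namespace Stmt19

lemma minmax_mono {a b r₁ r₂ : ℝ} (h0 : 0 ≤ r₁) (h12 : r₁ ≤ r₂) :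
    min a (r₂ + b) - max (-a) (r₂ - b) ≤ min a (r₁ + b) - max (-a) (r₁ - b) := by
  simp only [min_def, max_def]
  split_ifs <;> linarith

lemma vol_pair (a b : ℝ) : volume ({a, b} : Set ℝ) = 0 := by
  have : ({a, b} : Set ℝ).Finite := by
    exact (Set.finite_singleton b).insert a
  exact this.measure_zero volume

lemma vol_inter_sandwich {u v : ℝ} {C D : Set ℝ} (h1 : Ioo u v ⊆ D) (h2 : D ⊆ Icc u v) :
    volume (C ∩ D) = volume (C ∩ Ioo u v) := by
  refine le_antisymm ?_ (measure_mono (inter_subset_inter_right _ h1))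
  calc volume (C ∩ D) ≤ volume ((C ∩ Ioo u v) ∪ {u, v}) := by
        refine measure_mono ?_
        rintro y ⟨hyC, hyD⟩
        by_cases hy : y ∈ Ioo u v
        · exact Or.inl ⟨hyC, hy⟩
        · have := h2 hyD
          rcases eq_or_lt_of_le this.1 with h | h
          · exact Or.inr (Or.inl h.symm)
          · rcases eq_or_lt_of_le this.2 with h' | h'
            · exact Or.inr (Or.inr h')
            · exact absurd ⟨h, h'⟩ hy
    _ ≤ volume (C ∩ Ioo u v) + volume ({u, v} : Set ℝ) := measure_union_le _ _
    _ = volume (C ∩ Ioo u v) := by rw [vol_pair, add_zero]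

def Solid (A : Set ℝ) : Prop := ∀ ⦃y⦄, y ∈ A → ∀ ⦃w : ℝ⦄, |w| ≤ |y| → w ∈ A

lemma solid_cases {A : Set ℝ} (hA : Solid A) :
    A = ∅ ∨ A = univ ∨ ∃ a : ℝ, 0 ≤ a ∧ Ioo (-a) a ⊆ A ∧ A ⊆ Icc (-a) a := by
  by_cases hne : A = ∅
  · exact Or.inl hne
  right
  obtain ⟨y₀, hy₀⟩ := Set.nonempty_iff_ne_empty.mpr hne
  by_cases hbd : BddAbove A
  · right
    set a := sSup A with ha
    have h0A : (0 : ℝ) ∈ A := hA hy₀ (by simp)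
    have ha0 : 0 ≤ a := le_csSup hbd h0A
    refine ⟨a, ha0, ?_, ?_⟩
    · intro y hy
      have hya : |y| < a := abs_lt.mpr ⟨hy.1, hy.2⟩
      obtain ⟨z, hzA, hz⟩ := exists_lt_of_lt_csSup ⟨y₀, hy₀⟩ hya
      have : |y| ≤ |z| := le_trans hz.le (le_abs_self z)
      exact hA hzA this
    · intro y hy
      have h1 : y ≤ a := le_csSup hbd hy
      have hyneg : -y ∈ A := hA hy (by rw [abs_neg])
      have h2 : -y ≤ a := le_csSup hbd hyneg
      exact ⟨by linarith, h1⟩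
  · left
    ext y
    simp only [mem_univ, iff_true]
    obtain ⟨z, hzA, hz⟩ := not_bddAbove_iff.mp hbd |y|
    exact hA hzA (le_trans hz.le (le_abs_self z))

lemma preimage_sub_Ioo (r b : ℝ) :
    (fun y : ℝ => r - y) ⁻¹' Ioo (-b) b = Ioo (r - b) (r + b) := by
  ext y
  simp only [mem_preimage, mem_Ioo]
  constructor <;> rintro ⟨h1, h2⟩ <;> constructor <;> linarith

lemma preimage_sub_Icc (r b : ℝ) :
    (fun y : ℝ => r - y) ⁻¹' Icc (-b) b = Icc (r - b) (r + b) := by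
  ext y
  simp only [mem_preimage, mem_Icc]
  constructor <;> rintro ⟨h1, h2⟩ <;> constructor <;> linarith

lemma oneD {A B : Set ℝ} (hBm : MeasurableSet B)
    (hA : Solid A) (hB : Solid B) {r₁ r₂ : ℝ} (h0 : 0 ≤ r₁) (h12 : r₁ ≤ r₂) :
    volume (A ∩ (fun y => r₂ - y) ⁻¹' B) ≤ volume (A ∩ (fun y => r₁ - y) ⁻¹' B) := by
  rcases solid_cases hA with rfl | rfl | ⟨a, ha0, hA1, hA2⟩
  · simp
  · simp only [univ_inter]
    rw [(Measure.measurePreserving_sub_left volume r₂).measure_preimage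
          hBm.nullMeasurableSet,
        (Measure.measurePreserving_sub_left volume r₁).measure_preimage
          hBm.nullMeasurableSet]
  rcases solid_cases hB with rfl | rfl | ⟨b, hb0, hB1, hB2⟩
  · simp
  · simp
  · have key : ∀ r : ℝ, volume (A ∩ (fun y => r - y) ⁻¹' B)
        = ENNReal.ofReal (min a (r + b) - max (-a) (r - b)) := by
      intro r
      have hpre1 : Ioo (r - b) (r + b) ⊆ (fun y => r - y) ⁻¹' B := by
        rw [← preimage_sub_Ioo r b]; exact preimage_mono hB1
      have hpre2 : (fun y => r - y) ⁻¹' B ⊆ Icc (r - b) (r + b) := by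
        rw [← preimage_sub_Icc r b]; exact preimage_mono hB2
      rw [vol_inter_sandwich hpre1 hpre2, inter_comm, vol_inter_sandwich hA1 hA2,
        inter_comm, Ioo_inter_Ioo, Real.volume_Ioo]
    rw [key r₁, key r₂]
    exact ENNReal.ofReal_le_ofReal (minmax_mono h0 h12)


lemma norm_complex (w : ℂ) : ‖w‖ = Real.sqrt (w.re ^ 2 + w.im ^ 2) := by
  rw [Complex.norm_def, Complex.normSq_apply]
  congr 1
  ring

lemma norm_sub_I (r : ℝ) (w : ℂ) :
    ‖(r : ℂ) * Complex.I - w‖ = Real.sqrt (w.re ^ 2 + (r - w.im) ^ 2) := by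
  rw [norm_complex]
  simp only [Complex.sub_re, Complex.sub_im, Complex.mul_re, Complex.mul_im,
    Complex.I_re, Complex.I_im, Complex.ofReal_re, Complex.ofReal_im]
  congr 1
  ring

lemma twoD (h' : ℝ → ℝ) (hm : Antitone h') (t u : ℝ) {r₁ r₂ : ℝ}
    (h0 : 0 ≤ r₁) (h12 : r₁ ≤ r₂) :
    volume {w : ℂ | t < h' ‖w‖ ∧ u < h' ‖(r₂ : ℂ) * Complex.I - w‖}
      ≤ volume {w : ℂ | t < h' ‖w‖ ∧ u < h' ‖(r₁ : ℂ) * Complex.I - w‖} := by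
  have hh'm : Measurable h' := hm.measurable
  have hsqrt : ∀ r : ℝ, Measurable fun p : ℝ × ℝ => h' (Real.sqrt (p.1 ^ 2 + (r - p.2) ^ 2)) := by
    intro r
    exact hh'm.comp (Real.continuous_sqrt.comp
      (((continuous_fst.pow 2)).add (((continuous_const.sub continuous_snd).pow 2)))).measurable
  have hsqrt0 : Measurable fun p : ℝ × ℝ => h' (Real.sqrt (p.1 ^ 2 + p.2 ^ 2)) :=
    hh'm.comp (Real.continuous_sqrt.comp
      (((continuous_fst.pow 2)).add (continuous_snd.pow 2))).measurable
  have hW : ∀ r : ℝ, MeasurableSet {p : ℝ × ℝ |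
      t < h' (Real.sqrt (p.1 ^ 2 + p.2 ^ 2)) ∧ u < h' (Real.sqrt (p.1 ^ 2 + (r - p.2) ^ 2))} := by
    intro r
    exact (measurableSet_lt measurable_const hsqrt0).inter
      (measurableSet_lt measurable_const (hsqrt r))
  have key : ∀ r : ℝ, volume {w : ℂ | t < h' ‖w‖ ∧ u < h' ‖(r : ℂ) * Complex.I - w‖}
      = ∫⁻ c : ℝ, volume {y : ℝ |
          t < h' (Real.sqrt (c ^ 2 + y ^ 2)) ∧ u < h' (Real.sqrt (c ^ 2 + (r - y) ^ 2))} := by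
    intro r
    have hset : {w : ℂ | t < h' ‖w‖ ∧ u < h' ‖(r : ℂ) * Complex.I - w‖}
        = Complex.measurableEquivRealProd ⁻¹' {p : ℝ × ℝ |
            t < h' (Real.sqrt (p.1 ^ 2 + p.2 ^ 2)) ∧ u < h' (Real.sqrt (p.1 ^ 2 + (r - p.2) ^ 2))} := by
      ext w
      simp only [mem_setOf_eq, mem_preimage]
      rw [norm_complex, norm_sub_I]
      exact Iff.rfl
    rw [hset, Complex.volume_preserving_equiv_real_prod.measure_preimage
      (hW r).nullMeasurableSet, Measure.volume_eq_prod, Measure.prod_apply (hW r)]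
    rfl
  rw [key r₁, key r₂]
  refine lintegral_mono fun c => ?_
  have hdecomp : ∀ r : ℝ, {y : ℝ |
      t < h' (Real.sqrt (c ^ 2 + y ^ 2)) ∧ u < h' (Real.sqrt (c ^ 2 + (r - y) ^ 2))}
      = {y : ℝ | t < h' (Real.sqrt (c ^ 2 + y ^ 2))}
        ∩ (fun y => r - y) ⁻¹' {y : ℝ | u < h' (Real.sqrt (c ^ 2 + y ^ 2))} := fun r => rfl
  rw [hdecomp r₁, hdecomp r₂]
  have hsolid : ∀ s : ℝ, Solid {y : ℝ | s < h' (Real.sqrt (c ^ 2 + y ^ 2))} := by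
    intro s y hy w hw
    have h1 : w ^ 2 ≤ y ^ 2 := by
      rw [← sq_abs w, ← sq_abs y]
      exact pow_le_pow_left₀ (abs_nonneg w) hw 2
    have h2 : Real.sqrt (c ^ 2 + w ^ 2) ≤ Real.sqrt (c ^ 2 + y ^ 2) :=
      Real.sqrt_le_sqrt (by linarith)
    exact lt_of_lt_of_le hy (hm h2)
  have hBmeas : MeasurableSet {y : ℝ | u < h' (Real.sqrt (c ^ 2 + y ^ 2))} := by
    refine measurableSet_lt measurable_const ?_
    exact hh'm.comp (Real.continuous_sqrt.comp
      ((continuous_const).add (continuous_id.pow 2))).measurable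
  exact oneD hBmeas (hsolid t) (hsolid u) h0 h12


noncomputable def J (h' : ℝ → ℝ) (z : ℂ) : ℝ≥0∞ :=
  ∫⁻ w : ℂ, ENNReal.ofReal (h' ‖w‖) * ENNReal.ofReal (h' ‖z - w‖)

lemma ofReal_rep (c : ℝ) :
    ENNReal.ofReal c = ∫⁻ t in Ioi (0 : ℝ), (Iio c).indicator 1 t := by
  rw [lintegral_indicator_one measurableSet_Iio, Measure.restrict_apply measurableSet_Iio,
    Set.Iio_inter_Ioi, Real.volume_Ioo, sub_zero]

lemma layercake (h' : ℝ → ℝ) (hm : Antitone h') (z : ℂ) :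
    J h' z = ∫⁻ t in Ioi (0 : ℝ), ∫⁻ u in Ioi (0 : ℝ),
      volume {w : ℂ | t < h' ‖w‖ ∧ u < h' ‖z - w‖} := by
  have hh'm : Measurable h' := hm.measurable
  have m1 : Measurable fun w : ℂ => h' ‖w‖ := hh'm.comp measurable_norm
  have m2 : Measurable fun w : ℂ => h' ‖z - w‖ :=
    hh'm.comp (measurable_norm.comp (measurable_id.const_sub z))
  calc J h' z
      = ∫⁻ w : ℂ, ∫⁻ t in Ioi (0 : ℝ),
          (Iio (h' ‖w‖)).indicator 1 t * ENNReal.ofReal (h' ‖z - w‖) := by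
        refine lintegral_congr fun w => ?_
        rw [lintegral_mul_const' _ _ ENNReal.ofReal_ne_top, ← ofReal_rep]
    _ = ∫⁻ t in Ioi (0 : ℝ), ∫⁻ w : ℂ,
          (Iio (h' ‖w‖)).indicator 1 t * ENNReal.ofReal (h' ‖z - w‖) := by
        refine lintegral_lintegral_swap ?_
        refine Measurable.aemeasurable ?_
        have : (Function.uncurry fun (w : ℂ) (t : ℝ) =>
            (Iio (h' ‖w‖)).indicator 1 t * ENNReal.ofReal (h' ‖z - w‖))
            = fun p : ℂ × ℝ => (if p.2 < h' ‖p.1‖ then 1 else 0) * ENNReal.ofReal (h' ‖z - p.1‖) := by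
          funext p
          simp [Function.uncurry, Set.indicator_apply]
        rw [this]
        refine Measurable.mul ?_ (ENNReal.measurable_ofReal.comp (m2.comp measurable_fst))
        exact Measurable.ite (measurableSet_lt measurable_snd (m1.comp measurable_fst))
          measurable_const measurable_const
    _ = ∫⁻ t in Ioi (0 : ℝ), ∫⁻ u in Ioi (0 : ℝ),
          volume {w : ℂ | t < h' ‖w‖ ∧ u < h' ‖z - w‖} := by
        refine lintegral_congr fun t => ?_
        calc ∫⁻ w : ℂ, (Iio (h' ‖w‖)).indicator 1 t * ENNReal.ofReal (h' ‖z - w‖)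
            = ∫⁻ w : ℂ, ∫⁻ u in Ioi (0 : ℝ),
                (Iio (h' ‖w‖)).indicator 1 t * (Iio (h' ‖z - w‖)).indicator 1 u := by
              refine lintegral_congr fun w => ?_
              rw [lintegral_const_mul' _ _ (by
                rw [Set.indicator_apply]; split_ifs <;> simp), ← ofReal_rep]
          _ = ∫⁻ u in Ioi (0 : ℝ), ∫⁻ w : ℂ,
                (Iio (h' ‖w‖)).indicator 1 t * (Iio (h' ‖z - w‖)).indicator 1 u := by
              refine lintegral_lintegral_swap (f := fun (w : ℂ) (u : ℝ) =>
                (Iio (h' ‖w‖)).indicator 1 t * (Iio (h' ‖z - w‖)).indicator 1 u) ?_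
              refine Measurable.aemeasurable ?_
              rw [Function.uncurry_def]
              simp only [Set.indicator_apply, mem_Iio]
              refine Measurable.mul ?_ ?_
              · exact Measurable.ite
                  (measurableSet_lt measurable_const (m1.comp measurable_fst))
                  measurable_const measurable_const
              · exact Measurable.ite (measurableSet_lt measurable_snd (m2.comp measurable_fst))
                  measurable_const measurable_const
          _ = ∫⁻ u in Ioi (0 : ℝ), volume {w : ℂ | t < h' ‖w‖ ∧ u < h' ‖z - w‖} := by
              refine lintegral_congr fun u => ?_
              refine Eq.trans (lintegral_congr fun w => ?_)
                (lintegral_indicator_one ((measurableSet_lt measurable_const m1).inter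
                  (measurableSet_lt measurable_const m2)))
              simp only [Set.indicator_apply, mem_Iio, mem_setOf_eq, Pi.one_apply]
              split_ifs <;> simp_all <;>
                first
                | linarith
                | (obtain ⟨hA, hB⟩ := ‹_ ∧ _›; linarith)


lemma coreC (h' : ℝ → ℝ) (hm : Antitone h') {r₁ r₂ : ℝ} (h0 : 0 ≤ r₁) (h12 : r₁ ≤ r₂) :
    J h' ((r₂ : ℂ) * Complex.I) ≤ J h' ((r₁ : ℂ) * Complex.I) := by
  rw [layercake h' hm, layercake h' hm]
  exact lintegral_mono fun t => lintegral_mono fun u => twoD h' hm t u h0 h12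

lemma J_rot (h' : ℝ → ℝ) (z : ℂ) : J h' z = J h' ((‖z‖ : ℂ) * Complex.I) := by
  by_cases hz : z = 0
  · subst hz; simp
  · have hnz : (‖z‖ : ℂ) * Complex.I ≠ 0 := by
      exact mul_ne_zero (by
        simpa using norm_ne_zero_iff.mpr hz) Complex.I_ne_zero
    set c : ℂ := z / ((‖z‖ : ℂ) * Complex.I) with hc
    have habs : ‖c‖ = 1 := by
      rw [hc, norm_div, norm_mul, Complex.norm_I, Complex.norm_real, norm_norm,
        mul_one, div_self (norm_ne_zero_iff.mpr hz)]
    set u : Circle := ⟨c, by simpa [Submonoid.unitSphere] using habs⟩ with hu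
    have hmp : MeasurePreserving (rotation u) volume volume :=
      (rotation u).measurePreserving
    have hemb : MeasurableEmbedding (rotation u) :=
      (rotation u).toHomeomorph.toMeasurableEquiv.measurableEmbedding
    have hcz : (u : ℂ) * ((‖z‖ : ℂ) * Complex.I) = z := by
      rw [hu]
      exact div_mul_cancel₀ z hnz
    calc J h' z = ∫⁻ w : ℂ, ENNReal.ofReal (h' ‖rotation u w‖)
          * ENNReal.ofReal (h' ‖z - rotation u w‖) :=
        (hmp.lintegral_comp_emb hemb _).symm
      _ = J h' ((‖z‖ : ℂ) * Complex.I) := by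
        refine lintegral_congr fun w => ?_
        rw [rotation_apply]
        have h1 : ‖(u : ℂ) * w‖ = ‖w‖ := by
          rw [norm_mul, habs, one_mul]
        have h2 : z - (u : ℂ) * w = (u : ℂ) * ((‖z‖ : ℂ) * Complex.I - w) := by
          rw [mul_sub, hcz]
        have h3 : ‖z - (u : ℂ) * w‖ = ‖(‖z‖ : ℂ) * Complex.I - w‖ := by
          rw [h2, norm_mul, habs, one_mul]
        rw [h1, h3]

end Stmt19

open Stmt19 in
theorem stmt_19 (h : ℝ → ℝ) (hnn : ∀ r : ℝ, 0 ≤ r → 0 ≤ h r)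
    (hmono : AntitoneOn h (Set.Ici 0))
    (H : EuclideanSpace ℝ (Fin 2) → ℝ) (hH : H = fun x => h ‖x‖)
    (hint : Integrable H) :
    ∀ x₁ x₂ : EuclideanSpace ℝ (Fin 2), ‖x₁‖ ≤ ‖x₂‖ →
      (∫ y, H y * H (x₂ - y)) ≤ (∫ y, H y * H (x₁ - y)) := by
  intro x₁ x₂ hx
  set h' : ℝ → ℝ := fun r => h (max r 0) with hh'
  have hmono' : Antitone h' := fun r s hrs =>
    hmono (le_max_right r 0) (le_max_right s 0) (max_le_max hrs le_rfl)
  have hnn' : ∀ r, 0 ≤ h' r := fun r => hnn _ (le_max_right r 0)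
  have hH' : H = fun x => h' ‖x‖ := by
    funext x
    rw [hH, hh']
    simp [max_eq_left (norm_nonneg x)]
  have hh'm : Measurable h' := hmono'.measurable
  have hHmeas : Measurable H := by
    rw [hH']; exact hh'm.comp measurable_norm
  have hmeas : ∀ x : EuclideanSpace ℝ (Fin 2),
      AEStronglyMeasurable (fun y => H y * H (x - y)) volume := by
    intro x
    exact (hHmeas.mul (hHmeas.comp (measurable_id.const_sub x))).aestronglyMeasurable
  have hnng : ∀ x : EuclideanSpace ℝ (Fin 2),
      0 ≤ᵐ[volume] fun y => H y * H (x - y) := by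
    intro x
    refine Filter.Eventually.of_forall fun y => ?_
    rw [hH']
    exact mul_nonneg (hnn' _) (hnn' _)
  rw [integral_eq_lintegral_of_nonneg_ae (hnng x₂) (hmeas x₂),
    integral_eq_lintegral_of_nonneg_ae (hnng x₁) (hmeas x₁)]
  set L : ℂ ≃ₗᵢ[ℝ] EuclideanSpace ℝ (Fin 2) := Complex.orthonormalBasisOneI.repr with hL
  have hLmp : MeasurePreserving L volume volume := L.measurePreserving
  have hLemb : MeasurableEmbedding L :=
    L.toHomeomorph.toMeasurableEquiv.measurableEmbedding
  have key : ∀ x : EuclideanSpace ℝ (Fin 2),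
      (∫⁻ y, ENNReal.ofReal (H y * H (x - y))) = J h' ((‖x‖ : ℂ) * Complex.I) := by
    intro x
    have step1 : (∫⁻ y, ENNReal.ofReal (H y * H (x - y)))
        = ∫⁻ w : ℂ, ENNReal.ofReal (H (L w) * H (x - L w)) :=
      (hLmp.lintegral_comp_emb hLemb _).symm
    rw [step1]
    have step2 : (∫⁻ w : ℂ, ENNReal.ofReal (H (L w) * H (x - L w)))
        = J h' (L.symm x) := by
      refine lintegral_congr fun w => ?_
      have e1 : ‖L w‖ = ‖w‖ := L.norm_map w
      have e2 : ‖x - L w‖ = ‖L.symm x - w‖ := by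
        have e3 : x - L w = L (L.symm x - w) := by
          rw [map_sub, L.apply_symm_apply]
        rw [e3, L.norm_map]
      simp only [hH']
      rw [ENNReal.ofReal_mul (hnn' _), e1, e2]
    rw [step2, J_rot h' (L.symm x), L.symm.norm_map]
  have hfin : (∫⁻ y, ENNReal.ofReal (H y * H (x₁ - y))) ≠ ⊤ := by
    have hb : ∀ y : EuclideanSpace ℝ (Fin 2),
        ENNReal.ofReal (H y * H (x₁ - y)) ≤ ENNReal.ofReal (H y) * ENNReal.ofReal (h 0) := by
      intro y
      rw [← ENNReal.ofReal_mul (by rw [hH']; exact hnn' _)]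
      refine ENNReal.ofReal_le_ofReal ?_
      refine mul_le_mul_of_nonneg_left ?_ (by rw [hH']; exact hnn' _)
      rw [hH]
      exact hmono (Set.self_mem_Ici) (norm_nonneg _) (norm_nonneg _)
    refine ne_top_of_le_ne_top ?_ (lintegral_mono hb)
    rw [lintegral_mul_const' _ _ ENNReal.ofReal_ne_top]
    exact ENNReal.mul_ne_top hint.lintegral_lt_top.ne ENNReal.ofReal_ne_top
  refine ENNReal.toReal_mono hfin ?_
  rw [key x₁, key x₂]
  exact coreC h' hmono' (norm_nonneg x₁) hx
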